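/- Let p be a prime, q = p^m, and k a positive integer dividing q − 1, with n = (q − 1)/k. Let Ā be the q × q complex matrix indexed by 𝔽_q with Ā(u,v) = 1 if u ≠ v and v − u ∉ R_k, and Ā(u,v) = 0 otherwise (the adjacency matrix of the complement of Γ(k,q)). Then the characteristic polynomial of Ā equals (X − (k−1)n)·∏_{i=0}^{k−1} (X − (−1 − η_i))^n in ℂ[X]. -/

import Mathlib

open Polynomial Finset
open scoped Classical

/-- The `i`-th cyclotomic Gaussian period for the pair `(k, q)`, where `q = #F`,
`ω` is a generator of `Fˣ` and the coset `ω^i⟨ω^k⟩` is described as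
`{ω^i y^k : y ∈ Fˣ}`. -/
noncomputable def gaussianPeriod (p : ℕ) (F : Type) [Field F] [Fintype F]
    [Algebra (ZMod p) F] (ω : Fˣ) (k i : ℕ) : ℂ :=
  ∑ x ∈ Finset.univ.filter (fun x : Fˣ => ∃ y : Fˣ, x = ω ^ i * y ^ k),
    Complex.exp (2 * Real.pi * Complex.I *
      ((Algebra.trace (ZMod p) F (x : F)).val : ℂ) / (p : ℂ))

/-- The complex adjacency matrix of the generalized Paley (di)graph `Γ(k,q)`:
there is an arrow from `u` to `v` iff `v - u` is a nonzero `k`-th power. -/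
noncomputable def gpAdj (F : Type) [Field F] [Fintype F] (k : ℕ) : Matrix F F ℂ :=
  Matrix.of fun u v => if ∃ x : Fˣ, v - u = (x : F) ^ k then 1 else 0

/-- The generalized Paley graph `Γ(k,q)` as a simple graph (when the connection
set is symmetric, `fromRel` gives exactly the intended graph). -/
def gpGraph (F : Type) [Field F] (k : ℕ) : SimpleGraph F :=
  SimpleGraph.fromRel fun u v => ∃ x : Fˣ, v - u = (x : F) ^ k

/-- The complex adjacency matrix of the complement of `Γ(k,q)`. -/
noncomputable def gpAdjCompl (F : Type) [Field F] [Fintype F] (k : ℕ) : Matrix F F ℂ :=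
  Matrix.of fun u v => if u ≠ v ∧ ¬ (∃ x : Fˣ, v - u = (x : F) ^ k) then 1 else 0

/-! ### Auxiliary material -/

set_option linter.unusedSectionVars false

section Psi
variable (p : ℕ) [Fact p.Prime] (F : Type) [Field F] [Fintype F] [Algebra (ZMod p) F]

/-- The standard additive character of a finite field of characteristic `p`. -/
noncomputable def myPsi : AddChar F ℂ :=
  (ZMod.stdAddChar).compAddMonoidHom (Algebra.trace (ZMod p) F).toAddMonoidHom

lemma myPsi_apply (x : F) : myPsi p F x =
    Complex.exp (2 * Real.pi * Complex.I *
      ((Algebra.trace (ZMod p) F x).val : ℂ) / (p : ℂ)) := by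
  simp only [myPsi, AddChar.compAddMonoidHom_apply, LinearMap.toAddMonoidHom_coe,
    ZMod.stdAddChar_apply, ZMod.toCircle_apply]

lemma myPsi_sum_eq_zero (a : F) (ha : a ≠ 0) : ∑ x : F, myPsi p F (a * x) = 0 := by
  have h1 : (AddChar.mulShift (myPsi p F) a) ≠ 0 := by
    rw [AddChar.ne_zero_iff]
    obtain ⟨t, ht⟩ : ∃ t : F, Algebra.trace (ZMod p) F t ≠ 0 := by
      by_contra h
      push_neg at h
      exact Algebra.trace_ne_zero (ZMod p) F (LinearMap.ext h)
    refine ⟨a⁻¹ * t, ?_⟩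
    rw [AddChar.mulShift_apply, mul_inv_cancel_left₀ ha]
    simp only [myPsi, AddChar.compAddMonoidHom_apply, LinearMap.toAddMonoidHom_coe,
      ZMod.stdAddChar_apply]
    intro hc
    rw [Circle.coe_eq_one] at hc
    exact ht (by simpa using ZMod.injective_toCircle (hc.trans (by simp)))
  have := AddChar.sum_eq_zero_iff_ne_zero.mpr h1
  simpa using this

lemma myPsi_mul_conj (x y : F) :
    myPsi p F x * (starRingEnd ℂ) (myPsi p F y) = myPsi p F (x - y) := by
  have h1 : (starRingEnd ℂ) (myPsi p F y) = myPsi p F (-y) := by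
    simp only [myPsi, AddChar.compAddMonoidHom_apply, LinearMap.toAddMonoidHom_coe,
      ZMod.stdAddChar_apply, map_neg]
    rw [AddChar.map_neg_eq_inv, ← Circle.coe_inv_eq_conj]
  rw [h1, ← AddChar.map_add_eq_mul, sub_eq_add_neg]

end Psi

section Charpoly

lemma my_charpoly_conj {n R : Type} [Fintype n] [DecidableEq n] [CommRing R]
    (P M : Matrix n n R) [Invertible P] : (P * M * ⅟P).charpoly = M.charpoly := by
  have hPQ : P.map (C : R →+* R[X]) * (⅟P).map C = 1 := by
    rw [← Matrix.map_mul, mul_invOf_self, Matrix.map_one _ (map_zero C) (map_one C)]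
  have hch : (P * M * ⅟P).charmatrix = P.map C * M.charmatrix * (⅟P).map C := by
    rw [Matrix.charmatrix, Matrix.charmatrix]
    have hmap : (P * M * ⅟P).map (C : R →+* R[X]) = P.map C * M.map C * (⅟P).map C := by
      simp [Matrix.map_mul]
    rw [RingHom.mapMatrix_apply, RingHom.mapMatrix_apply, hmap, Matrix.mul_sub, Matrix.sub_mul]
    congr 1
    rw [Matrix.mul_assoc, (Matrix.scalar_commute (X : R[X]) (Commute.all X) ((⅟P).map C)).eq,
      ← Matrix.mul_assoc, hPQ, Matrix.one_mul]
  rw [Matrix.charpoly, Matrix.charpoly, hch, Matrix.det_mul, Matrix.det_mul,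
    mul_comm (P.map C).det, mul_assoc, ← Matrix.det_mul, hPQ, Matrix.det_one, mul_one]

lemma my_charpoly_diagonal {n R : Type} [Fintype n] [DecidableEq n] [CommRing R]
    (d : n → R) : (Matrix.diagonal d).charpoly = ∏ i : n, (X - C (d i)) := by
  have h : (Matrix.diagonal d).charmatrix = Matrix.diagonal fun i => (X : R[X]) - C (d i) := by
    ext i j
    by_cases h : i = j
    · subst h; simp [Matrix.charmatrix_apply_eq]
    · simp [Matrix.charmatrix_apply_ne _ _ _ h, Matrix.diagonal_apply_ne _ h]
  rw [Matrix.charpoly, h, Matrix.det_diagonal]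

end Charpoly

section Count
variable {F : Type} [Field F] [Fintype F]

lemma exists_decomp (ω : Fˣ) (dlog : Fˣ → ℕ) (hdlog : ∀ a, ω ^ dlog a = a)
    (k : ℕ) (a : Fˣ) : ∃ c : Fˣ, a = ω ^ (dlog a % k) * c ^ k := by
  refine ⟨ω ^ (dlog a / k), ?_⟩
  conv_lhs => rw [← hdlog a]
  rw [← pow_mul, ← pow_add, Nat.mod_add_div']

lemma mem_fiber_iff (ω : Fˣ) (dlog : Fˣ → ℕ) (hdlog : ∀ a, ω ^ dlog a = a)
    {k : ℕ} (hkd : k ∣ orderOf ω) {i : ℕ} (hik : i < k) (a : Fˣ) :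
    dlog a % k = i ↔ ∃ y : Fˣ, a = ω ^ i * y ^ k := by
  constructor
  · rintro rfl
    exact exists_decomp ω dlog hdlog k a
  · rintro ⟨y, rfl⟩
    have h1 : ω ^ dlog (ω ^ i * y ^ k) = ω ^ (i + dlog y * k) := by
      rw [hdlog]
      conv_lhs => rw [← hdlog y]
      rw [← pow_mul, ← pow_add]
    have h2 : dlog (ω ^ i * y ^ k) ≡ i + dlog y * k [MOD k] :=
      ((pow_eq_pow_iff_modEq).mp h1).of_dvd hkd
    rw [Nat.ModEq] at h2
    rw [h2, Nat.add_mul_mod_self_right, Nat.mod_eq_of_lt hik]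

lemma count_pow (ω : Fˣ) (dlog : Fˣ → ℕ) (hdlog : ∀ a, ω ^ dlog a = a)
    {k n : ℕ} (hkd : k ∣ orderOf ω) (hn : n = orderOf ω / k) :
    (univ.filter fun u : Fˣ => ∃ y : Fˣ, u = y ^ k).card = n := by
  have hset : (univ.filter fun u : Fˣ => ∃ y : Fˣ, u = y ^ k)
      = univ.filter (fun u : Fˣ => u ∈ Subgroup.zpowers (ω ^ k)) := by
    ext u
    simp only [mem_filter, mem_univ, true_and]
    constructor
    · rintro ⟨y, rfl⟩
      rw [← mem_powers_iff_mem_zpowers]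
      exact ⟨dlog y, by show (ω ^ k) ^ dlog y = y ^ k; rw [pow_right_comm, hdlog]⟩
    · intro hu
      rw [← mem_powers_iff_mem_zpowers] at hu
      obtain ⟨t, ht⟩ := hu
      exact ⟨ω ^ t, by rw [← ht]; exact pow_right_comm ω k t⟩
  rw [hset, ← Fintype.card_subtype, Fintype.card_zpowers, orderOf_pow,
    Nat.gcd_eq_right hkd, hn]

lemma count_fiber (ω : Fˣ) (dlog : Fˣ → ℕ) (hdlog : ∀ a, ω ^ dlog a = a)
    {k n : ℕ} (hkd : k ∣ orderOf ω) (hn : n = orderOf ω / k) {i : ℕ} (hik : i < k) :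
    (univ.filter fun a : Fˣ => dlog a % k = i).card = n := by
  have h1 : (univ.filter fun a : Fˣ => dlog a % k = i)
      = (univ.filter fun u : Fˣ => ∃ y : Fˣ, u = y ^ k).image (fun u => ω ^ i * u) := by
    ext a
    simp only [mem_filter, mem_univ, true_and, mem_image,
      mem_fiber_iff ω dlog hdlog hkd hik]
    constructor
    · rintro ⟨y, rfl⟩; exact ⟨y ^ k, ⟨y, rfl⟩, rfl⟩
    · rintro ⟨u, ⟨y, rfl⟩, rfl⟩; exact ⟨y, rfl⟩
  rw [h1, Finset.card_image_of_injective _ (mul_right_injective _),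
    count_pow ω dlog hdlog hkd hn]

end Count

theorem stmt_1 (p m k n : ℕ) (hp : p.Prime) (hm : 0 < m)
    (F : Type) [Field F] [Fintype F] [Algebra (ZMod p) F]
    (hF : Fintype.card F = p ^ m)
    (ω : Fˣ) (hω : ∀ u : Fˣ, u ∈ Subgroup.zpowers ω)
    (hk : 0 < k) (hkq : k ∣ p ^ m - 1) (hn : n = (p ^ m - 1) / k) :
    (gpAdjCompl F k).charpoly =
      (X - C (((k - 1) * n : ℕ) : ℂ)) *
        ∏ i ∈ Finset.range k, (X - C (-1 - gaussianPeriod p F ω k i)) ^ n := by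
  haveI := Fact.mk hp
  obtain ⟨dlog, hdlog⟩ : ∃ f : Fˣ → ℕ, ∀ a : Fˣ, ω ^ f a = a := by
    have hex : ∀ a : Fˣ, ∃ t : ℕ, ω ^ t = a := fun a =>
      (Submonoid.mem_powers_iff _ _).mp (mem_powers_iff_mem_zpowers.mpr (hω a))
    exact ⟨fun a => (hex a).choose, fun a => (hex a).choose_spec⟩
  have hq2 : 2 ≤ p ^ m := Nat.one_lt_pow (by omega) hp.one_lt
  have hcard : Fintype.card Fˣ = p ^ m - 1 := by
    rw [← Nat.card_eq_fintype_card, Nat.card_units, Nat.card_eq_fintype_card, hF]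
  have hord : orderOf ω = p ^ m - 1 := by
    rw [orderOf_eq_card_of_forall_mem_zpowers hω, Nat.card_eq_fintype_card, hcard]
  have hkd : k ∣ orderOf ω := by rw [hord]; exact hkq
  have hnord : n = orderOf ω / k := by rw [hord]; exact hn
  have hkn : k * n = p ^ m - 1 := by rw [hn]; exact Nat.mul_div_cancel' hkq
  set S : Finset F := univ.filter (fun c : F => c ≠ 0 ∧ ¬∃ x : Fˣ, c = (x : F) ^ k) with hS
  set T : Finset F := univ.filter (fun c : F => ∃ x : Fˣ, c = (x : F) ^ k) with hT
  set lam : F → ℂ := fun a => ∑ c ∈ S, myPsi p F (a * c) with hlam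
  set U : Matrix F F ℂ := Matrix.of (fun v a : F => myPsi p F (a * v)) with hU
  set D : Matrix F F ℂ := Matrix.diagonal lam with hD
  -- step M1 : conjugation relation
  have hUD : gpAdjCompl F k * U = U * D := by
    ext u a
    rw [hD, Matrix.mul_diagonal, Matrix.mul_apply]
    have hre : ∀ v : F, gpAdjCompl F k u v * U v a =
        (if v - u ≠ 0 ∧ ¬∃ x : Fˣ, v - u = (x : F) ^ k
          then myPsi p F (a * u) * myPsi p F (a * (v - u)) else 0) := by
      intro v
      simp only [gpAdjCompl, hU, Matrix.of_apply, ite_mul, one_mul, zero_mul]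
      have hiff : (u ≠ v ∧ ¬∃ x : Fˣ, v - u = (x : F) ^ k) ↔
          (v - u ≠ 0 ∧ ¬∃ x : Fˣ, v - u = (x : F) ^ k) := by
        constructor
        · rintro ⟨h1, h2⟩; exact ⟨sub_ne_zero.mpr (Ne.symm h1), h2⟩
        · rintro ⟨h1, h2⟩; exact ⟨(sub_ne_zero.mp h1).symm, h2⟩
      rw [if_congr hiff rfl rfl]
      congr 1
      rw [← AddChar.map_add_eq_mul, ← mul_add]
      congr 2
      ring
    rw [Finset.sum_congr rfl fun v _ => hre v]
    rw [Fintype.sum_equiv (Equiv.subRight u)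
      (fun v : F => if v - u ≠ 0 ∧ ¬∃ x : Fˣ, v - u = (x : F) ^ k
        then myPsi p F (a * u) * myPsi p F (a * (v - u)) else 0)
      (fun c : F => if c ≠ 0 ∧ ¬∃ x : Fˣ, c = (x : F) ^ k
        then myPsi p F (a * u) * myPsi p F (a * c) else 0)
      (fun v => by simp [Equiv.subRight])]
    rw [← Finset.sum_filter, ← hS, ← Finset.mul_sum]
    rfl
  -- step M2 : invertibility of U
  have horth : U * U.conjTranspose = ((p ^ m : ℕ) : ℂ) • 1 := by
    ext u w
    rw [Matrix.mul_apply]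
    simp only [Matrix.conjTranspose_apply, hU, Matrix.of_apply]
    have hterm : ∀ a : F, myPsi p F (a * u) * star (myPsi p F (a * w))
        = myPsi p F ((u - w) * a) := by
      intro a
      rw [← starRingEnd_apply, myPsi_mul_conj, ← mul_sub]
      congr 1
      ring
    rw [Finset.sum_congr rfl fun a _ => hterm a]
    by_cases h : u = w
    · subst h
      simp only [sub_self, zero_mul, AddChar.map_zero_eq_one, Finset.sum_const,
        Finset.card_univ, hF, nsmul_eq_mul, mul_one]
      simp [Matrix.one_apply]
    · rw [myPsi_sum_eq_zero p F _ (sub_ne_zero.mpr h)]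
      simp [Matrix.one_apply, h]
  have hqne : ((p ^ m : ℕ) : ℂ) ≠ 0 := Nat.cast_ne_zero.mpr (by positivity)
  haveI : Invertible U := invertibleOfRightInverse U
    (((p ^ m : ℕ) : ℂ)⁻¹ • U.conjTranspose)
    (by rw [Matrix.mul_smul, horth, smul_smul, inv_mul_cancel₀ hqne, one_smul])
  have hAeq : gpAdjCompl F k = U * D * ⅟U := by
    rw [← hUD, mul_assoc, mul_invOf_self, mul_one]
  rw [hAeq, my_charpoly_conj, hD, my_charpoly_diagonal]
  -- cardinalities
  have hTne : ∀ c : F, (∃ x : Fˣ, c = (x : F) ^ k) → c ≠ 0 := by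
    rintro c ⟨x, rfl⟩
    exact pow_ne_zero _ x.ne_zero
  have hSsplit : S = (univ.erase (0 : F)) \ T := by
    ext c
    simp only [hS, hT, mem_filter, mem_univ, true_and, mem_sdiff, mem_erase, and_true]
  have hTsub : T ⊆ univ.erase (0 : F) := by
    intro c hc
    rw [hT, mem_filter] at hc
    exact Finset.mem_erase.mpr ⟨hTne c hc.2, mem_univ c⟩
  have himg : T = (univ.filter fun u : Fˣ => ∃ y : Fˣ, u = y ^ k).image
      (fun u : Fˣ => (u : F)) := by
    ext c
    simp only [hT, mem_filter, mem_univ, true_and, mem_image]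
    constructor
    · rintro ⟨x, rfl⟩
      exact ⟨x ^ k, ⟨x, rfl⟩, (Units.val_pow_eq_pow_val _ _)⟩
    · rintro ⟨u, ⟨y, rfl⟩, rfl⟩
      exact ⟨y, (Units.val_pow_eq_pow_val _ _).symm⟩
  have hcardT : T.card = n := by
    rw [himg, Finset.card_image_of_injective _ Units.val_injective,
      count_pow ω dlog hdlog hkd hnord]
  have hcarderase : (univ.erase (0 : F)).card = p ^ m - 1 := by
    rw [Finset.card_erase_of_mem (mem_univ 0), Finset.card_univ, hF]
  have hcardS : S.card = (k - 1) * n := by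
    rw [hSsplit, Finset.card_sdiff_of_subset hTsub, hcardT, hcarderase, tsub_mul, one_mul, hkn]
  have hlam0 : lam 0 = (((k - 1) * n : ℕ) : ℂ) := by
    rw [hlam]
    simp only [zero_mul, AddChar.map_zero_eq_one, Finset.sum_const, nsmul_eq_mul, mul_one]
    rw [hcardS]
  -- the eigenvalue at a nonzero a
  have hlamu : ∀ a : Fˣ, lam ↑a = -1 - gaussianPeriod p F ω k (dlog a % k) := by
    intro a
    have hsum_all : ∑ c : F, myPsi p F (↑a * c) = 0 := myPsi_sum_eq_zero p F _ a.ne_zero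
    have hsum_ne : ∑ c ∈ univ.erase (0 : F), myPsi p F (↑a * c) = -1 := by
      have h := Finset.add_sum_erase univ (fun c => myPsi p F (↑a * c)) (mem_univ (0 : F))
      simp only [mul_zero, AddChar.map_zero_eq_one, hsum_all] at h
      linear_combination h
    have hsum_T : ∑ c ∈ T, myPsi p F (↑a * c) =
        gaussianPeriod p F ω k (dlog a % k) := by
      obtain ⟨c0, hc0⟩ := exists_decomp ω dlog hdlog k a
      have h2 : (univ.filter fun w : Fˣ => ∃ y : Fˣ, w = ω ^ (dlog a % k) * y ^ k)
          = (univ.filter fun u : Fˣ => ∃ y : Fˣ, u = y ^ k).image (fun u => a * u) := by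
        ext w
        simp only [mem_filter, mem_univ, true_and, mem_image]
        constructor
        · rintro ⟨y, rfl⟩
          refine ⟨(c0⁻¹ * y) ^ k, ⟨c0⁻¹ * y, rfl⟩, ?_⟩
          conv_lhs => rw [hc0]
          rw [mul_pow, inv_pow, mul_assoc, mul_inv_cancel_left]
        · rintro ⟨u, ⟨y, rfl⟩, rfl⟩
          refine ⟨c0 * y, ?_⟩
          conv_lhs => rw [hc0]
          rw [mul_pow, mul_assoc]
      rw [himg, Finset.sum_image (fun x _ y _ h => Units.ext h)]
      rw [gaussianPeriod, h2, Finset.sum_image (fun x _ y _ h => mul_left_cancel h)]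
      refine Finset.sum_congr rfl fun u _ => ?_
      rw [myPsi_apply, Units.val_mul]
    rw [hlam]
    simp only []
    rw [hSsplit, Finset.sum_sdiff_eq_sub hTsub, hsum_ne, hsum_T]
  -- assembling the product
  have hsplit : ∏ a : F, (X - C (lam a)) =
      (X - C (lam 0)) * ∏ a : Fˣ, (X - C (lam ↑a)) := by
    rw [← Finset.mul_prod_erase univ _ (mem_univ (0 : F))]
    congr 1
    have him : (univ.erase (0 : F)) = (univ : Finset Fˣ).image (fun u : Fˣ => (u : F)) := by
      ext c
      simp only [mem_erase, mem_univ, and_true, mem_image, true_and]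
      constructor
      · intro hc; exact ⟨Units.mk0 c hc, rfl⟩
      · rintro ⟨u, rfl⟩; exact u.ne_zero
    rw [him, Finset.prod_image (fun x _ y _ h => Units.ext h)]
  have hprod_units : ∏ a : Fˣ, (X - C (lam ↑a)) =
      ∏ i ∈ Finset.range k, (X - C (-1 - gaussianPeriod p F ω k i)) ^ n := by
    have hfe : ∀ a : Fˣ, X - C (lam ↑a)
        = X - C (-1 - gaussianPeriod p F ω k (dlog a % k)) := fun a => by rw [hlamu a]
    rw [Finset.prod_congr rfl fun a _ => hfe a]
    rw [← Finset.prod_fiberwise_of_maps_to (t := Finset.range k)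
      (g := fun a : Fˣ => dlog a % k)
      (fun a _ => Finset.mem_range.mpr (Nat.mod_lt _ hk)) _]
    refine Finset.prod_congr rfl fun i hi => ?_
    rw [Finset.prod_congr rfl fun a ha => by rw [(Finset.mem_filter.mp ha).2],
      Finset.prod_const, count_fiber ω dlog hdlog hkd hnord (Finset.mem_range.mp hi)]
  rw [hsplit, hlam0, hprod_units]
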